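/- Let G be a group and ρ: G → GL_2(k) a representation over a field k of characteristic ≠ 2 whose trace satisfies tr ρ ≡ χ_1 + χ_2 for two characters χ_1, χ_2: G → k^× with χ_1 ≠ χ_2 (as an identity of functions, with det ρ = χ_1·χ_2). If ρ is semisimple, then ρ ≅ χ_1 ⊕ χ_2. -/

import Mathlib

/-- The representation of `G` on `Fin 2 → k` associated with a homomorphism
`ρ : G → GL₂(k)`. -/
noncomputable def matrixGLRep {k : Type*} [CommRing k] {G : Type*} [Group G]
    (ρ : G →* Matrix.GeneralLinearGroup (Fin 2) k) : Representation k G (Fin 2 → k) :=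
  (Matrix.toLinAlgEquiv' (R := k)).toAlgHom.toRingHom.toMonoidHom.comp
    ((Units.coeHom (Matrix (Fin 2) (Fin 2) k)).comp ρ)

lemma detne {k : Type*} [Field k] (v w : Fin 2 → k) (hv : v ≠ 0) (hw : ∀ c : k, w ≠ c • v) :
    v 0 * w 1 - w 0 * v 1 ≠ 0 := by
  intro hD
  rw [sub_eq_zero] at hD
  have hv' : v 0 ≠ 0 ∨ v 1 ≠ 0 := by
    by_contra h
    push_neg at h
    exact hv (funext fun i => by fin_cases i <;> simp [h.1, h.2])
  rcases hv' with h0 | h1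
  · refine hw (w 0 / v 0) (funext fun i => ?_)
    fin_cases i
    · simp [div_mul_cancel₀ _ h0]
    · show w 1 = w 0 / v 0 * v 1
      rw [div_mul_eq_mul_div, eq_div_iff h0]
      linear_combination hD
  · refine hw (w 1 / v 1) (funext fun i => ?_)
    fin_cases i
    · show w 0 = w 1 / v 1 * v 0
      rw [div_mul_eq_mul_div, eq_div_iff h1]
      linear_combination -hD
    · simp [div_mul_cancel₀ _ h1]
lemma spantwo {k : Type*} [Field k] (v w : Fin 2 → k) (hv : v ≠ 0) (hw : ∀ c : k, w ≠ c • v)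
    (u : Fin 2 → k) : ∃ α β : k, u = α • v + β • w := by
  have hD := detne v w hv hw
  refine ⟨(u 0 * w 1 - w 0 * u 1) / (v 0 * w 1 - w 0 * v 1),
          (v 0 * u 1 - u 0 * v 1) / (v 0 * w 1 - w 0 * v 1), funext fun i => ?_⟩
  fin_cases i
  · show u 0 = _ / _ * v 0 + _ / _ * w 0
    rw [div_mul_eq_mul_div, div_mul_eq_mul_div, ← add_div, eq_div_iff hD]
    ring
  · show u 1 = _ / _ * v 1 + _ / _ * w 1
    rw [div_mul_eq_mul_div, div_mul_eq_mul_div, ← add_div, eq_div_iff hD]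
    ring

lemma aux_complement {k : Type*} [Field k] {G : Type*} [Group G]
    (ρr : Representation k G (Fin 2 → k))
    (hss : IsSemisimpleModule (MonoidAlgebra k G) ρr.asModule)
    (v : Fin 2 → k) (hv : v ≠ 0) (χ : G → k) (hχ : ∀ g, ρr g v = χ g • v) :
    ∃ w : Fin 2 → k, (∀ c : k, w ≠ c • v) ∧ ∀ g, ∃ μ : k, ρr g w = μ • w := by
  classical
  have hsingle : ∀ (g : G) (a : k) (x : ρr.asModule),
      (MonoidAlgebra.single g a : MonoidAlgebra k G) • x = a • ρr g x := by
    intro g a x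
    show ρr.asAlgebraHom (MonoidAlgebra.single g a) x = _
    rw [Representation.asAlgebraHom_single]
    rfl
  have hksmul : ∀ (c : k) (x : ρr.asModule),
      (algebraMap k (MonoidAlgebra k G) c) • x = c • x := by
    intro c x
    rw [show (algebraMap k (MonoidAlgebra k G)) c
        = MonoidAlgebra.single (1 : G) c from rfl, hsingle, _root_.map_one]
    rfl
  have key : ∀ r : MonoidAlgebra k G, ∀ x : ρr.asModule,
      (∃ c : k, x = c • v) → ∃ c : k, r • x = c • v := by
    intro r
    induction r using MonoidAlgebra.induction_linear with
    | zero => intro x _; exact ⟨0, by simp; rfl⟩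
    | add f g hf hg =>
        intro x hx
        obtain ⟨c, hc⟩ := hf x hx
        obtain ⟨d, hd⟩ := hg x hx
        exact ⟨c + d, by rw [add_smul, hc, hd, add_smul]; rfl⟩
    | single g a =>
        rintro x ⟨c, hc⟩
        refine ⟨a * (c * χ g), ?_⟩
        rw [hsingle g a x]
        show (a • ρr g x : Fin 2 → k) = (a * (c * χ g)) • v
        rw [hc, LinearMap.map_smul, hχ g, smul_smul, smul_smul, mul_assoc]
  let p : Submodule (MonoidAlgebra k G) ρr.asModule :=
    { carrier := {x : ρr.asModule | ∃ c : k, x = c • v}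
      add_mem' := by rintro a b ⟨c, rfl⟩ ⟨d, rfl⟩; exact ⟨c + d, (add_smul c d v).symm⟩
      zero_mem' := ⟨0, by simp; rfl⟩
      smul_mem' := fun r {x} hx => key r x hx }
  obtain ⟨q, hq⟩ := exists_isCompl p
  have hpne : p ≠ ⊤ := by
    intro h
    have hv' : v 0 ≠ 0 ∨ v 1 ≠ 0 := by
      by_contra hcon
      push_neg at hcon
      exact hv (funext fun i => by fin_cases i <;> simp [hcon.1, hcon.2])
    rcases hv' with h0 | h1
    · have hm : (show ρr.asModule from fun i => if i = 1 then (1:k) else 0) ∈ p :=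
        h ▸ Submodule.mem_top
      obtain ⟨c, hc⟩ := hm
      have h01 := congrFun hc 0
      have h11 := congrFun hc 1
      simp [Pi.smul_apply] at h01 h11
      rw [h01.resolve_right h0] at h11
      simp at h11
    · have hm : (show ρr.asModule from fun i => if i = 0 then (1:k) else 0) ∈ p :=
        h ▸ Submodule.mem_top
      obtain ⟨c, hc⟩ := hm
      have h01 := congrFun hc 0
      have h11 := congrFun hc 1
      simp [Pi.smul_apply] at h01 h11
      rw [h11.resolve_right h1] at h01
      simp at h01
  have hqne : q ≠ ⊥ := by
    rintro rfl
    exact hpne (by simpa using hq.codisjoint.eq_top)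
  obtain ⟨w, hwq, hwne⟩ := Submodule.exists_mem_ne_zero_of_ne_bot hqne
  let w' : Fin 2 → k := w
  have hwp : ∀ c : k, w' ≠ c • v := by
    intro c hc
    have hmem : w ∈ p ⊓ q := ⟨⟨c, hc⟩, hwq⟩
    rw [hq.inf_eq_bot] at hmem
    exact hwne hmem
  refine ⟨w', hwp, fun g => ?_⟩
  obtain ⟨α, β, hαβ⟩ := spantwo v w' hv hwp (ρr g w')
  have hmem : (show ρr.asModule from ρr g w') ∈ q := by
    have h1 : (MonoidAlgebra.single g (1:k) : MonoidAlgebra k G) • w ∈ q := q.smul_mem _ hwq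
    rwa [hsingle, one_smul] at h1
  have hβw : β • w ∈ q := by
    have h1 := q.smul_mem (algebraMap k (MonoidAlgebra k G) β) hwq
    rwa [hksmul] at h1
  have hsub : (show ρr.asModule from α • v) ∈ q := by
    have h2 : (show ρr.asModule from α • v) = (show ρr.asModule from ρr g w') - β • w := by
      show α • v = ρr g w' - β • w'
      rw [hαβ]; abel
    rw [h2]
    exact sub_mem hmem hβw
  have hzero : α • v = (0 : Fin 2 → k) := by
    have hmem2 : (show ρr.asModule from α • v) ∈ p ⊓ q := ⟨⟨α, rfl⟩, hsub⟩
    rw [hq.inf_eq_bot] at hmem2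
    exact hmem2
  exact ⟨β, by rw [hαβ, hzero, zero_add]⟩

lemma buildP {k : Type*} [Field k] {G : Type*} [Group G]
    (ρ : G →* Matrix.GeneralLinearGroup (Fin 2) k)
    (v w : Fin 2 → k) (hD : v 0 * w 1 - w 0 * v 1 ≠ 0)
    (α β : G → k)
    (hva : ∀ g, (ρ g : Matrix (Fin 2) (Fin 2) k).mulVec v = α g • v)
    (hwb : ∀ g, (ρ g : Matrix (Fin 2) (Fin 2) k).mulVec w = β g • w) :
    ∃ P : Matrix.GeneralLinearGroup (Fin 2) k, ∀ g : G,
      (ρ g : Matrix (Fin 2) (Fin 2) k) =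
        (P : Matrix (Fin 2) (Fin 2) k) * Matrix.diagonal ![α g, β g] *
          ((P⁻¹ : Matrix.GeneralLinearGroup (Fin 2) k) : Matrix (Fin 2) (Fin 2) k) := by
  set P : Matrix (Fin 2) (Fin 2) k := Matrix.of ![![v 0, w 0], ![v 1, w 1]] with hPdef
  have hdet : P.det ≠ 0 := by
    rw [Matrix.det_fin_two]
    simpa [P] using hD
  have hu : IsUnit P.det := isUnit_iff_ne_zero.mpr hdet
  refine ⟨⟨P, P⁻¹, Matrix.mul_nonsing_inv P hu, Matrix.nonsing_inv_mul P hu⟩, fun g => ?_⟩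
  have key : (ρ g : Matrix (Fin 2) (Fin 2) k) * P = P * Matrix.diagonal ![α g, β g] := by
    ext i j
    have hv0 := congrFun (hva g) 0
    have hv1 := congrFun (hva g) 1
    have hw0 := congrFun (hwb g) 0
    have hw1 := congrFun (hwb g) 1
    simp [Matrix.mulVec, dotProduct, Fin.sum_univ_two] at hv0 hv1 hw0 hw1
    fin_cases i <;> fin_cases j <;>
      simp [Matrix.mul_apply, Fin.sum_univ_two, P, Matrix.diagonal] <;>
      [linear_combination hv0; linear_combination hw0; linear_combination hv1;
       linear_combination hw1]
  show (ρ g : Matrix (Fin 2) (Fin 2) k) = P * Matrix.diagonal ![α g, β g] * P⁻¹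
  rw [← key, Matrix.mul_assoc, Matrix.mul_nonsing_inv P hu, Matrix.mul_one]

lemma eig2 {k : Type*} [Field k] (A : Matrix (Fin 2) (Fin 2) k) (x y : k)
    (h1 : A 0 0 + A 1 1 = x + y) (h2 : A 0 0 * A 1 1 - A 0 1 * A 1 0 = x * y) :
    A * (A - y • 1) = x • (A - y • 1) := by
  ext i j
  fin_cases i <;> fin_cases j <;>
    simp [Matrix.mul_apply, Fin.sum_univ_two, Matrix.one_apply]
  · linear_combination A 0 0 * h1 - h2
  · linear_combination A 0 1 * h1
  · linear_combination A 1 0 * h1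
  · linear_combination A 1 1 * h1 - h2
/-- Let `ρ : G → GL₂(k)` be a semisimple representation over a field `k` of characteristic
`≠ 2` with `tr ρ = χ₁ + χ₂` and `det ρ = χ₁·χ₂` for distinct characters `χ₁ ≠ χ₂`. Then
`ρ ≅ χ₁ ⊕ χ₂`, i.e. `ρ` is conjugate to the corresponding diagonal representation. -/
theorem semisimple_rep_with_split_trace_is_diagonalizable
    {k : Type*} [Field k] (h2 : (2 : k) ≠ 0) {G : Type*} [Group G]
    (ρ : G →* Matrix.GeneralLinearGroup (Fin 2) k)
    (hss : IsSemisimpleModule (MonoidAlgebra k G) (matrixGLRep ρ).asModule)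
    (χ₁ χ₂ : G →* kˣ) (hne : χ₁ ≠ χ₂)
    (htr : ∀ g : G, Matrix.trace (ρ g : Matrix (Fin 2) (Fin 2) k) = χ₁ g + χ₂ g)
    (hdet : ∀ g : G, Matrix.det (ρ g : Matrix (Fin 2) (Fin 2) k) = (χ₁ g : k) * (χ₂ g : k)) :
    ∃ P : Matrix.GeneralLinearGroup (Fin 2) k, ∀ g : G,
      (ρ g : Matrix (Fin 2) (Fin 2) k) =
        (P : Matrix (Fin 2) (Fin 2) k) * Matrix.diagonal ![(χ₁ g : k), (χ₂ g : k)] *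
          ((P⁻¹ : Matrix.GeneralLinearGroup (Fin 2) k) : Matrix (Fin 2) (Fin 2) k) := by
  classical
  have hrepapp : ∀ (g : G) (x : Fin 2 → k), (matrixGLRep ρ) g x
      = ((ρ g : Matrix (Fin 2) (Fin 2) k)).mulVec x := fun g x => rfl
  obtain ⟨g₀, hg₀⟩ : ∃ g, (χ₁ g : k) ≠ (χ₂ g : k) := by
    by_contra hcon
    push_neg at hcon
    exact hne (MonoidHom.ext fun g => Units.ext (hcon g))
  set A : Matrix (Fin 2) (Fin 2) k := (ρ g₀ : Matrix (Fin 2) (Fin 2) k) with hA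
  have htr' : A 0 0 + A 1 1 = (χ₁ g₀ : k) + χ₂ g₀ := by
    have h := htr g₀; rwa [Matrix.trace_fin_two] at h
  have hdet' : A 0 0 * A 1 1 - A 0 1 * A 1 0 = (χ₁ g₀ : k) * χ₂ g₀ := by
    have h := hdet g₀; rwa [Matrix.det_fin_two] at h
  set B : Matrix (Fin 2) (Fin 2) k := A - (χ₂ g₀ : k) • 1 with hBdef
  set C : Matrix (Fin 2) (Fin 2) k := A - (χ₁ g₀ : k) • 1 with hCdef
  have hB : A * B = (χ₁ g₀ : k) • B := eig2 A _ _ htr' hdet'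
  have hC : A * C = (χ₂ g₀ : k) • C := eig2 A _ _ (by rw [htr']; ring) (by rw [hdet']; ring)
  have hBne : ∃ i j, B i j ≠ 0 := by
    by_contra hcon
    push_neg at hcon
    have h00 := hcon 0 0
    have h11 := hcon 1 1
    simp [hBdef, Matrix.one_apply, sub_eq_zero] at h00 h11
    exact hg₀ (by linear_combination h00 + h11 - htr')
  have hCne : ∃ i j, C i j ≠ 0 := by
    by_contra hcon
    push_neg at hcon
    have h00 := hcon 0 0
    have h11 := hcon 1 1
    simp [hCdef, Matrix.one_apply, sub_eq_zero] at h00 h11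
    exact hg₀ (by linear_combination htr' - h00 - h11)
  obtain ⟨i₁, j₁, hBij⟩ := hBne
  obtain ⟨i₂, j₂, hCij⟩ := hCne
  set v₁ : Fin 2 → k := fun i => B i j₁ with hv₁def
  set v₂ : Fin 2 → k := fun i => C i j₂ with hv₂def
  have hv₁ne : v₁ ≠ 0 := fun h => hBij (by simpa using congrFun h i₁)
  have hv₂ne : v₂ ≠ 0 := fun h => hCij (by simpa using congrFun h i₂)
  have hv₁eig : A.mulVec v₁ = (χ₁ g₀ : k) • v₁ := by
    funext i
    have h := congrFun (congrFun hB i) j₁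
    simp only [Matrix.mul_apply, Fin.sum_univ_two, Matrix.smul_apply, smul_eq_mul] at h
    simp only [Matrix.mulVec, dotProduct, Fin.sum_univ_two, Pi.smul_apply, smul_eq_mul,
      hv₁def]
    linear_combination h
  have hv₂eig : A.mulVec v₂ = (χ₂ g₀ : k) • v₂ := by
    funext i
    have h := congrFun (congrFun hC i) j₂
    simp only [Matrix.mul_apply, Fin.sum_univ_two, Matrix.smul_apply, smul_eq_mul] at h
    simp only [Matrix.mulVec, dotProduct, Fin.sum_univ_two, Pi.smul_apply, smul_eq_mul,
      hv₂def]
    linear_combination h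
  have hv₂nv₁ : ∀ c : k, v₂ ≠ c • v₁ := by
    intro c hc
    have h1 : A.mulVec v₂ = (c * (χ₁ g₀ : k)) • v₁ := by
      rw [hc, Matrix.mulVec_smul, hv₁eig, smul_smul]
    have h2 : A.mulVec v₂ = ((χ₂ g₀ : k) * c) • v₁ := by rw [hv₂eig, hc, smul_smul]
    have h3 : (((χ₂ g₀ : k)) * c - c * (χ₁ g₀ : k)) • v₁ = 0 := by
      rw [sub_smul, ← h1, ← h2, sub_self]
    rcases smul_eq_zero.mp h3 with h4 | h4
    · have hc0 : c = 0 := by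
        have h5 : c * ((χ₂ g₀ : k) - χ₁ g₀) = 0 := by linear_combination h4
        rcases mul_eq_zero.mp h5 with h | h
        · exact h
        · exact absurd (by linear_combination -h) hg₀
      exact hv₂ne (by rw [hc, hc0, zero_smul])
    · exact hv₁ne h4
  set Q : Matrix (Fin 2) (Fin 2) k := Matrix.of ![![v₁ 0, v₂ 0], ![v₁ 1, v₂ 1]] with hQdef
  have hQdet : IsUnit Q.det := by
    refine isUnit_iff_ne_zero.mpr ?_
    rw [Matrix.det_fin_two]
    simpa [hQdef] using detne v₁ v₂ hv₁ne hv₂nv₁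
  have hQQ : Q * Q⁻¹ = 1 := Matrix.mul_nonsing_inv Q hQdet
  have hQ'Q : Q⁻¹ * Q = 1 := Matrix.nonsing_inv_mul Q hQdet
  set σ : G → Matrix (Fin 2) (Fin 2) k :=
    fun g => Q⁻¹ * (ρ g : Matrix (Fin 2) (Fin 2) k) * Q with hσdef
  have hρσ : ∀ g, (ρ g : Matrix (Fin 2) (Fin 2) k) * Q = Q * σ g := by
    intro g
    show _ = Q * (Q⁻¹ * (ρ g : Matrix (Fin 2) (Fin 2) k) * Q)
    rw [← Matrix.mul_assoc, ← Matrix.mul_assoc, hQQ, Matrix.one_mul]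
  have hσtr : ∀ g, (σ g).trace = (χ₁ g : k) + χ₂ g := by
    intro g
    show (Q⁻¹ * (ρ g : Matrix (Fin 2) (Fin 2) k) * Q).trace = _
    rw [Matrix.trace_mul_comm, ← Matrix.mul_assoc, hQQ, Matrix.one_mul]
    exact htr g
  have hσdet2 : ∀ g, (σ g).det = (χ₁ g : k) * χ₂ g := by
    intro g
    show (Q⁻¹ * (ρ g : Matrix (Fin 2) (Fin 2) k) * Q).det = _
    rw [Matrix.det_mul, Matrix.det_mul]
    have hqq : Q⁻¹.det * Q.det = 1 := by rw [← Matrix.det_mul, hQ'Q, Matrix.det_one]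
    linear_combination (Q⁻¹.det * Q.det) * hdet g + ((χ₁ g : k) * (χ₂ g : k)) * hqq
  have hmulρ : ∀ g h', ((ρ (g * h') : Matrix (Fin 2) (Fin 2) k))
      = (ρ g : Matrix (Fin 2) (Fin 2) k) * (ρ h' : Matrix (Fin 2) (Fin 2) k) := by
    intro g h'; rw [map_mul]; rfl
  have hσmul : ∀ g h', σ (g * h') = σ g * σ h' := by
    intro g h'
    show Q⁻¹ * (ρ (g * h') : Matrix (Fin 2) (Fin 2) k) * Q
      = (Q⁻¹ * (ρ g : Matrix (Fin 2) (Fin 2) k) * Q) * (Q⁻¹ * (ρ h' : Matrix (Fin 2) (Fin 2) k) * Q)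
    rw [hmulρ]
    simp only [Matrix.mul_assoc]
    rw [Matrix.mul_nonsing_inv_cancel_left Q _ hQdet]
  have hχmul : ∀ (χ : G →* kˣ) (g h' : G), ((χ (g * h') : k)) = (χ g : k) * (χ h' : k) := by
    intro χ g h'; rw [map_mul, Units.val_mul]
  have hAQ : A * Q = Q * Matrix.diagonal ![(χ₁ g₀ : k), (χ₂ g₀ : k)] := by
    ext i j
    have h10 := congrFun hv₁eig 0
    have h11 := congrFun hv₁eig 1
    have h20 := congrFun hv₂eig 0
    have h21 := congrFun hv₂eig 1
    simp only [Matrix.mulVec, dotProduct, Fin.sum_univ_two, Pi.smul_apply,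
      smul_eq_mul] at h10 h11 h20 h21
    fin_cases i <;> fin_cases j <;>
      simp [Matrix.mul_apply, Fin.sum_univ_two, hQdef, Matrix.diagonal] <;>
      [linear_combination h10; linear_combination h20; linear_combination h11;
       linear_combination h21]
  have hσg₀ : σ g₀ = Matrix.diagonal ![(χ₁ g₀ : k), (χ₂ g₀ : k)] := by
    show Q⁻¹ * A * Q = _
    rw [Matrix.mul_assoc, hAQ, ← Matrix.mul_assoc, hQ'Q, Matrix.one_mul]
  have hdiag : ∀ g, σ g 0 0 = (χ₁ g : k) ∧ σ g 1 1 = (χ₂ g : k) := by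
    intro g
    have t1 := hσtr g
    rw [Matrix.trace_fin_two] at t1
    have t2 := hσtr (g₀ * g)
    rw [hσmul g₀ g, hσg₀, Matrix.trace_fin_two] at t2
    simp only [Matrix.mul_apply, Fin.sum_univ_two, Matrix.diagonal, Matrix.of_apply] at t2
    rw [hχmul χ₁ g₀ g, hχmul χ₂ g₀ g] at t2
    simp at t2
    have h00 : σ g 0 0 = (χ₁ g : k) := by
      have h3 : ((χ₁ g₀ : k) - χ₂ g₀) * (σ g 0 0 - χ₁ g) = 0 := by
        linear_combination t2 - (χ₂ g₀ : k) * t1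
      rcases mul_eq_zero.mp h3 with h | h
      · exact absurd (by linear_combination h) hg₀
      · linear_combination h
    exact ⟨h00, by linear_combination t1 - h00⟩
  have hbc : ∀ g, σ g 0 1 * σ g 1 0 = 0 := by
    intro g
    have d := hσdet2 g
    rw [Matrix.det_fin_two] at d
    obtain ⟨h00, h11⟩ := hdiag g
    linear_combination (σ g 1 1) * h00 + (χ₁ g : k) * h11 - d
  have hcross : ∀ g h', σ g 0 1 * σ h' 1 0 + σ g 1 0 * σ h' 0 1 = 0 := by
    intro g h'
    have t := hσtr (g * h')
    rw [hσmul g h', Matrix.trace_fin_two] at t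
    simp only [Matrix.mul_apply, Fin.sum_univ_two] at t
    rw [hχmul χ₁ g h', hχmul χ₂ g h'] at t
    obtain ⟨hg00, hg11⟩ := hdiag g
    obtain ⟨hh00, hh11⟩ := hdiag h'
    linear_combination t - σ h' 0 0 * hg00 - (χ₁ g : k) * hh00 - σ h' 1 1 * hg11
      - (χ₂ g : k) * hh11
  by_cases hc0 : ∀ h', σ h' 1 0 = 0
  · -- lower-left zero : v₁ is a common eigenvector for χ₁
    have hvcom : ∀ g, ((ρ g : Matrix (Fin 2) (Fin 2) k)).mulVec v₁ = (χ₁ g : k) • v₁ := by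
      intro g
      funext i
      have h := congrFun (congrFun (hρσ g) i) 0
      rw [show (0 : Fin 2) = 0 from rfl] at h
      simp only [Matrix.mul_apply, Fin.sum_univ_two] at h
      rw [(hdiag g).1, hc0 g] at h
      simp only [Matrix.mulVec, dotProduct, Fin.sum_univ_two, Pi.smul_apply, smul_eq_mul]
      fin_cases i <;> simp [hQdef] at h ⊢ <;> linear_combination h
    obtain ⟨w, hw, hμ'⟩ := aux_complement (matrixGLRep ρ) hss v₁ hv₁ne (fun g => (χ₁ g : k))
      (fun g => by rw [hrepapp]; exact hvcom g)
    choose μ hμ using hμ'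
    have hμ2 : ∀ g, ((ρ g : Matrix (Fin 2) (Fin 2) k)).mulVec w = μ g • w := fun g => by
      rw [← hrepapp]; exact hμ g
    obtain ⟨P, hP⟩ := buildP ρ v₁ w (detne v₁ w hv₁ne hw) (fun g => (χ₁ g : k)) μ hvcom hμ2
    have hPinv : ((P⁻¹ : Matrix.GeneralLinearGroup (Fin 2) k) : Matrix (Fin 2) (Fin 2) k)
        * (P : Matrix (Fin 2) (Fin 2) k) = 1 := Units.inv_mul P
    have hμeq : ∀ g, μ g = (χ₂ g : k) := by
      intro g
      have t := htr g
      rw [hP g, Matrix.trace_mul_comm, ← Matrix.mul_assoc, hPinv, Matrix.one_mul] at t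
      simp [Matrix.trace_fin_two, Matrix.diagonal] at t
      linear_combination t
    refine ⟨P, fun g => ?_⟩
    rw [← hμeq g]
    exact hP g
  · -- some lower-left entry nonzero : upper-right ≡ 0, v₂ is a common eigenvector for χ₂
    push_neg at hc0
    obtain ⟨h₀, hn⟩ := hc0
    have h01 : σ h₀ 0 1 = 0 := by
      rcases mul_eq_zero.mp (hbc h₀) with h | h
      · exact h
      · exact absurd h hn
    have hb0 : ∀ g, σ g 0 1 = 0 := by
      intro g
      have h := hcross g h₀
      rw [h01, mul_zero, add_zero] at h
      rcases mul_eq_zero.mp h with h | h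
      · exact h
      · exact absurd h hn
    have hvcom : ∀ g, ((ρ g : Matrix (Fin 2) (Fin 2) k)).mulVec v₂ = (χ₂ g : k) • v₂ := by
      intro g
      funext i
      have h := congrFun (congrFun (hρσ g) i) 1
      simp only [Matrix.mul_apply, Fin.sum_univ_two] at h
      rw [(hdiag g).2, hb0 g] at h
      simp only [Matrix.mulVec, dotProduct, Fin.sum_univ_two, Pi.smul_apply, smul_eq_mul]
      fin_cases i <;> simp [hQdef] at h ⊢ <;> linear_combination h
    obtain ⟨w, hw, hμ'⟩ := aux_complement (matrixGLRep ρ) hss v₂ hv₂ne (fun g => (χ₂ g : k))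
      (fun g => by rw [hrepapp]; exact hvcom g)
    choose μ hμ using hμ'
    have hμ2 : ∀ g, ((ρ g : Matrix (Fin 2) (Fin 2) k)).mulVec w = μ g • w := fun g => by
      rw [← hrepapp]; exact hμ g
    have hDD : w 0 * v₂ 1 - v₂ 0 * w 1 ≠ 0 := by
      have h := detne v₂ w hv₂ne hw
      intro hcon
      exact h (by linear_combination -hcon)
    obtain ⟨P, hP⟩ := buildP ρ w v₂ hDD μ (fun g => (χ₂ g : k)) hμ2 hvcom
    have hPinv : ((P⁻¹ : Matrix.GeneralLinearGroup (Fin 2) k) : Matrix (Fin 2) (Fin 2) k)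
        * (P : Matrix (Fin 2) (Fin 2) k) = 1 := Units.inv_mul P
    have hμeq : ∀ g, μ g = (χ₁ g : k) := by
      intro g
      have t := htr g
      rw [hP g, Matrix.trace_mul_comm, ← Matrix.mul_assoc, hPinv, Matrix.one_mul] at t
      simp [Matrix.trace_fin_two, Matrix.diagonal] at t
      linear_combination t
    refine ⟨P, fun g => ?_⟩
    rw [← hμeq g]
    exact hP g
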